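/- arXiv:2005.04590 — 3 statements merged into one kernel-verified Lean document; each statement's English description precedes it below -/
import Mathlib

section
/- Let X and Y be A-bounded operators on H admitting A-adjoints (i.e. there exist Xs, Ys with A∘Xs = X*∘A and A∘Ys = Y*∘A). Then w_𝔸([[0,X],[Y,0]]) ≤ (‖X‖_A + ‖Y‖_A)/2. -/
noncomputable def sInner {E : Type*} [NormedAddCommGroup E] [InnerProductSpace ℂ E]
    (A : E →L[ℂ] E) (x y : E) : ℂ := inner ℂ (A x) y

noncomputable def sNorm {E : Type*} [NormedAddCommGroup E] [InnerProductSpace ℂ E]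
    (A : E →L[ℂ] E) (x : E) : ℝ := Real.sqrt (sInner A x x).re

/-- The `A`-operator seminorm. -/
noncomputable def opSNorm {E : Type*} [NormedAddCommGroup E] [InnerProductSpace ℂ E]
    (A T : E →L[ℂ] E) : ℝ := sSup {c | ∃ x : E, sNorm A x = 1 ∧ c = sNorm A (T x)}

/-- The `A`-numerical radius. -/
noncomputable def numRad {E : Type*} [NormedAddCommGroup E] [InnerProductSpace ℂ E]
    (A T : E →L[ℂ] E) : ℝ := sSup {c | ∃ x : E, sNorm A x = 1 ∧ c = ‖sInner A (T x) x‖}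

/-- `T` is `A`-bounded. -/
def ABounded {E : Type*} [NormedAddCommGroup E] [InnerProductSpace ℂ E]
    (A T : E →L[ℂ] E) : Prop := ∃ c > 0, ∀ x : E, sNorm A (T x) ≤ c * sNorm A x

/-- The 2×2 block operator `[[T, X], [Y, S]]` on `H ⊕ H` (with the ℓ² product structure). -/
noncomputable def blk {H : Type*} [NormedAddCommGroup H] [InnerProductSpace ℂ H]
    (T X Y S : H →L[ℂ] H) : WithLp 2 (H × H) →L[ℂ] WithLp 2 (H × H) :=
  ((WithLp.prodContinuousLinearEquiv 2 ℂ H H).symm.toContinuousLinearMap.comp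
    (((T.coprod X).prod (Y.coprod S)).comp
      (WithLp.prodContinuousLinearEquiv 2 ℂ H H).toContinuousLinearMap))

/-- The diagonal operator `𝔸 = diag(A, A)` on `H ⊕ H`. -/
noncomputable def twoA {H : Type*} [NormedAddCommGroup H] [InnerProductSpace ℂ H]
    (A : H →L[ℂ] H) : WithLp 2 (H × H) →L[ℂ] WithLp 2 (H × H) := blk A 0 0 A


set_option linter.unusedSectionVars false

section helpers

variable {E : Type*} [NormedAddCommGroup E] [InnerProductSpace ℂ E] [CompleteSpace E]
  {A : E →L[ℂ] E}

lemma my_sNorm_nonneg (A : E →L[ℂ] E) (x : E) : 0 ≤ sNorm A x := Real.sqrt_nonneg _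

lemma my_re_nonneg (hA : A.IsPositive) (x : E) : 0 ≤ (sInner A x x).re := by
  exact (Complex.nonneg_iff.mp (hA.inner_nonneg_left x)).1

lemma my_sNorm_sq (hA : A.IsPositive) (x : E) : sNorm A x ^ 2 = (sInner A x x).re := by
  rw [sNorm, Real.sq_sqrt (my_re_nonneg hA x)]

noncomputable def myCore (hA : A.IsPositive) : PreInnerProductSpace.Core ℂ E where
  inner u v := sInner A u v
  conj_inner_symm u v := by
    simp only [sInner, inner_conj_symm]
    conv_rhs => rw [← hA.isSelfAdjoint.adjoint_eq]
    rw [ContinuousLinearMap.adjoint_inner_left]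
  re_inner_nonneg u := by exact (Complex.nonneg_iff.mp (hA.inner_nonneg_left u)).1
  add_left u v w := by simp [sInner, inner_add_left]
  smul_left u v r := by simp [sInner, inner_smul_left, mul_comm]

lemma my_conj (hA : A.IsPositive) (x y : E) :
    (starRingEnd ℂ) (sInner A y x) = sInner A x y := by
  simp only [sInner, inner_conj_symm]
  conv_rhs => rw [← hA.isSelfAdjoint.adjoint_eq]
  rw [ContinuousLinearMap.adjoint_inner_left]

lemma my_CS (hA : A.IsPositive) (x y : E) :
    ‖sInner A x y‖ ≤ sNorm A x * sNorm A y := by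
  have h := @InnerProductSpace.Core.inner_mul_inner_self_le ℂ E _ _ _ (myCore hA) x y
  have hx : @inner ℂ E (InnerProductSpace.Core.toPreInner' (c := myCore hA)) = sInner A := rfl
  rw [hx] at h
  have hsym : ‖sInner A y x‖ = ‖sInner A x y‖ := by
    rw [← my_conj hA x y]; exact (RCLike.norm_conj (sInner A y x)).symm
  rw [hsym] at h
  calc ‖sInner A x y‖ = Real.sqrt (‖sInner A x y‖ ^ 2) := (Real.sqrt_sq (norm_nonneg _)).symm
    _ ≤ Real.sqrt ((sNorm A x * sNorm A y) ^ 2) := by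
        apply Real.sqrt_le_sqrt
        rw [mul_pow, my_sNorm_sq hA, my_sNorm_sq hA, pow_two]
        exact le_trans h (by rw [RCLike.re_to_complex, RCLike.re_to_complex])
    _ = _ := Real.sqrt_sq (mul_nonneg (my_sNorm_nonneg _ _) (my_sNorm_nonneg _ _))


lemma my_sNorm_smul (A : E →L[ℂ] E) (t : ℂ) (x : E) :
    sNorm A (t • x) = ‖t‖ * sNorm A x := by
  unfold sNorm sInner
  rw [map_smul, inner_smul_left, inner_smul_right, ← mul_assoc, RCLike.conj_mul]
  rw [← RCLike.ofReal_pow, ← RCLike.re_to_complex, RCLike.re_ofReal_mul,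
    Real.sqrt_mul (sq_nonneg _), Real.sqrt_sq (norm_nonneg t), RCLike.re_to_complex]

lemma my_opSNorm_nonneg (A T : E →L[ℂ] E) : 0 ≤ opSNorm A T :=
  Real.sSup_nonneg fun c ⟨x, _, hc⟩ => hc ▸ my_sNorm_nonneg A (T x)

lemma my_opSNorm_mul {T : E →L[ℂ] E} (hT : ABounded A T) (v : E) :
    sNorm A (T v) ≤ opSNorm A T * sNorm A v := by
  obtain ⟨c, hc, hb⟩ := hT
  have hbdd : BddAbove {d | ∃ x : E, sNorm A x = 1 ∧ d = sNorm A (T x)} := by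
    refine ⟨c, fun d hd => ?_⟩
    obtain ⟨x, hx, hd⟩ := hd
    rw [hd]; simpa [hx] using hb x
  by_cases h0 : sNorm A v = 0
  · have h1 := hb v
    rw [h0, mul_zero] at h1
    have h2 : sNorm A (T v) = 0 := le_antisymm h1 (my_sNorm_nonneg A (T v))
    rw [h2, h0, mul_zero]
  · have hr : 0 < sNorm A v := lt_of_le_of_ne (my_sNorm_nonneg A v) (Ne.symm h0)
    have hnt : ‖((sNorm A v : ℂ))⁻¹‖ = (sNorm A v)⁻¹ := by
      rw [norm_inv, Complex.norm_real, Real.norm_eq_abs, abs_of_pos hr]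
    have hx1 : sNorm A (((sNorm A v : ℂ))⁻¹ • v) = 1 := by
      rw [my_sNorm_smul, hnt, inv_mul_cancel₀ h0]
    have hmem : sNorm A (T (((sNorm A v : ℂ))⁻¹ • v)) ∈
        {d | ∃ x : E, sNorm A x = 1 ∧ d = sNorm A (T x)} := ⟨_, hx1, rfl⟩
    have hle := le_csSup hbdd hmem
    rw [map_smul, my_sNorm_smul, hnt] at hle
    calc sNorm A (T v) = sNorm A v * ((sNorm A v)⁻¹ * sNorm A (T v)) := by
          field_simp
      _ ≤ sNorm A v * opSNorm A T := by
          exact mul_le_mul_of_nonneg_left hle hr.le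
      _ = opSNorm A T * sNorm A v := mul_comm _ _

end helpers

theorem stmt2 {H : Type*} [NormedAddCommGroup H] [InnerProductSpace ℂ H] [CompleteSpace H]
    (A : H →L[ℂ] H) (hA : A.IsPositive)
    (X Y : H →L[ℂ] H) (hX : ABounded A X) (hY : ABounded A Y)
    (hXadm : ∃ Xs : H →L[ℂ] H, A.comp Xs = (ContinuousLinearMap.adjoint X).comp A)
    (hYadm : ∃ Ys : H →L[ℂ] H, A.comp Ys = (ContinuousLinearMap.adjoint Y).comp A) :
    numRad (twoA A) (blk 0 X Y 0) ≤ (opSNorm A X + opSNorm A Y) / 2 := by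
  have hRHS : 0 ≤ (opSNorm A X + opSNorm A Y) / 2 := by
    have := my_opSNorm_nonneg A X; have := my_opSNorm_nonneg A Y; linarith
  apply Real.sSup_le _ hRHS
  rintro c ⟨z, hz1, rfl⟩
  have hblk1 : ((blk 0 X Y 0) z).fst = X z.snd := by
    show (0 : H →L[ℂ] H) z.fst + X z.snd = X z.snd
    simp
  have hblk2 : ((blk 0 X Y 0) z).snd = Y z.fst := by
    show Y z.fst + (0 : H →L[ℂ] H) z.snd = Y z.fst
    simp
  have hA1 : ∀ w : WithLp 2 (H × H), ((twoA A) w).fst = A w.fst := by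
    intro w
    show A w.fst + (0 : H →L[ℂ] H) w.snd = A w.fst
    simp
  have hA2 : ∀ w : WithLp 2 (H × H), ((twoA A) w).snd = A w.snd := by
    intro w
    show (0 : H →L[ℂ] H) w.fst + A w.snd = A w.snd
    simp
  have hval : sInner (twoA A) ((blk 0 X Y 0) z) z
      = sInner A (X z.snd) z.fst + sInner A (Y z.fst) z.snd := by
    unfold sInner
    rw [WithLp.prod_inner_apply]; simp only [WithLp.ofLp_fst, WithLp.ofLp_snd]; rw [hA1, hA2, hblk1, hblk2]
  have hzz : sInner (twoA A) z z = sInner A z.fst z.fst + sInner A z.snd z.snd := by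
    unfold sInner
    rw [WithLp.prod_inner_apply]; simp only [WithLp.ofLp_fst, WithLp.ofLp_snd]; rw [hA1, hA2]
  set a := sNorm A z.fst with ha
  set b := sNorm A z.snd with hb
  have hN : (sInner (twoA A) z z).re = 1 := by
    unfold sNorm at hz1
    exact Real.sqrt_eq_one.mp hz1
  have hab : a ^ 2 + b ^ 2 = 1 := by
    rw [ha, hb, my_sNorm_sq hA, my_sNorm_sq hA]
    rw [hzz, Complex.add_re] at hN
    exact hN
  have ha0 : 0 ≤ a := my_sNorm_nonneg A z.fst
  have hb0 : 0 ≤ b := my_sNorm_nonneg A z.snd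
  have h1 : ‖sInner A (X z.snd) z.fst‖ ≤ (opSNorm A X * b) * a :=
    le_trans (my_CS hA _ _)
      (mul_le_mul_of_nonneg_right (my_opSNorm_mul hX z.snd) ha0)
  have h2 : ‖sInner A (Y z.fst) z.snd‖ ≤ (opSNorm A Y * a) * b :=
    le_trans (my_CS hA _ _)
      (mul_le_mul_of_nonneg_right (my_opSNorm_mul hY z.fst) hb0)
  have hab2 : a * b ≤ 1 / 2 := by nlinarith [sq_nonneg (a - b)]
  have hX2 := mul_le_mul_of_nonneg_left hab2 (my_opSNorm_nonneg A X)
  have hY2 := mul_le_mul_of_nonneg_left hab2 (my_opSNorm_nonneg A Y)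
  calc ‖sInner (twoA A) ((blk 0 X Y 0) z) z‖
      ≤ ‖sInner A (X z.snd) z.fst‖ + ‖sInner A (Y z.fst) z.snd‖ := by
        rw [hval]; exact norm_add_le _ _
    _ ≤ (opSNorm A X * b) * a + (opSNorm A Y * a) * b := add_le_add h1 h2
    _ ≤ (opSNorm A X + opSNorm A Y) / 2 := by nlinarith [hX2, hY2]
end

section
/- Let X be an A-bounded operator on H admitting an A-adjoint (i.e. there exists Xs with A∘Xs = X*∘A). Then w_𝔸([[0,X],[0,0]]) = w_𝔸([[0,0],[X,0]]) = (1/2)·‖X‖_A. -/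
section Aux
set_option linter.unusedSectionVars false

variable {H : Type*} [NormedAddCommGroup H] [InnerProductSpace ℂ H] [CompleteSpace H]

lemma sInner_re_nonneg {A : H →L[ℂ] H} (hA : A.IsPositive) (x : H) :
    0 ≤ (sInner A x x).re := hA.2 x

lemma mysNorm_nonneg (A : H →L[ℂ] H) (x : H) : 0 ≤ sNorm A x := Real.sqrt_nonneg _

lemma sNorm_sq {A : H →L[ℂ] H} (hA : A.IsPositive) (x : H) :
    sNorm A x ^ 2 = (sInner A x x).re := Real.sq_sqrt (sInner_re_nonneg hA x)

lemma sInner_conj_symm {A : H →L[ℂ] H} (hA : A.IsPositive) (x y : H) :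
    (starRingEnd ℂ) (sInner A y x) = sInner A x y := by
  have hadj : ContinuousLinearMap.adjoint A = A := hA.isSelfAdjoint.adjoint_eq
  unfold sInner
  rw [inner_conj_symm, ← ContinuousLinearMap.adjoint_inner_left, hadj]

lemma sInner_smul_smul (A : H →L[ℂ] H) (c d : ℂ) (x y : H) :
    sInner A (c • x) (d • y) = (starRingEnd ℂ) c * d * sInner A x y := by
  unfold sInner
  rw [map_smul, inner_smul_left, inner_smul_right]
  ring

lemma sNorm_smul {A : H →L[ℂ] H} (hA : A.IsPositive) {t : ℝ} (ht : 0 ≤ t) (x : H) :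
    sNorm A ((t : ℂ) • x) = t * sNorm A x := by
  unfold sNorm
  have h : sInner A ((t : ℂ) • x) ((t : ℂ) • x) = ((t^2 : ℝ) : ℂ) * sInner A x x := by
    rw [sInner_smul_smul, Complex.conj_ofReal]
    push_cast
    ring
  rw [h]
  rw [Complex.re_ofReal_mul, Real.sqrt_mul (sq_nonneg t), Real.sqrt_sq ht]

lemma sInner_CS {A : H →L[ℂ] H} (hA : A.IsPositive) (x y : H) :
    ‖sInner A x y‖ ≤ sNorm A x * sNorm A y := by
  letI c : PreInnerProductSpace.Core ℂ H :=
    { inner := sInner A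
      conj_inner_symm := sInner_conj_symm hA
      re_inner_nonneg := sInner_re_nonneg hA
      add_left := fun x y z => by
        show sInner A (x + y) z = sInner A x z + sInner A y z
        unfold sInner; rw [map_add, inner_add_left]
      smul_left := fun x y r => by
        show sInner A (r • x) y = (starRingEnd ℂ) r * sInner A x y
        unfold sInner; rw [map_smul, inner_smul_left] }
  have h := @InnerProductSpace.Core.inner_mul_inner_self_le ℂ H _ _ _ c x y
  have h2 : ‖sInner A x y‖ * ‖sInner A y x‖ ≤ (sInner A x x).re * (sInner A y y).re := h
  have h3 : ‖sInner A y x‖ = ‖sInner A x y‖ := by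
    rw [← sInner_conj_symm hA x y, RCLike.norm_conj]
  rw [h3] at h2
  have h4 : ‖sInner A x y‖ ^ 2 ≤ (sNorm A x * sNorm A y) ^ 2 := by
    rw [mul_pow, sNorm_sq hA, sNorm_sq hA]
    nlinarith
  nlinarith [norm_nonneg (sInner A x y),
    mul_nonneg (mysNorm_nonneg A x) (mysNorm_nonneg A y)]

lemma myopSNorm_nonneg (A X : H →L[ℂ] H) : 0 ≤ opSNorm A X :=
  Real.sSup_nonneg (fun c hc => by obtain ⟨x, -, rfl⟩ := hc; exact mysNorm_nonneg A (X x))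

lemma opSNorm_bddAbove {A X : H →L[ℂ] H} (hX : ABounded A X) :
    BddAbove {c | ∃ x : H, sNorm A x = 1 ∧ c = sNorm A (X x)} := by
  obtain ⟨c, hc0, hc⟩ := hX
  refine ⟨c, fun d hd => ?_⟩
  obtain ⟨x, hx, rfl⟩ := hd
  have := hc x
  rw [hx, mul_one] at this
  exact this

lemma opSNorm_bound {A X : H →L[ℂ] H} (hA : A.IsPositive) (hX : ABounded A X) (y : H) :
    sNorm A (X y) ≤ opSNorm A X * sNorm A y := by
  obtain ⟨c, hc0, hc⟩ := hX
  by_cases h0 : sNorm A y = 0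
  · have := hc y
    rw [h0, mul_zero] at this
    rw [h0, mul_zero]
    exact this
  · have htpos : 0 < sNorm A y := lt_of_le_of_ne (mysNorm_nonneg A y) (Ne.symm h0)
    set t := sNorm A y with htdef
    have hxnorm : sNorm A (((t⁻¹ : ℝ) : ℂ) • y) = 1 := by
      rw [sNorm_smul hA (inv_nonneg.mpr htpos.le), ← htdef, inv_mul_cancel₀ h0]
    have hmem : sNorm A (X (((t⁻¹ : ℝ) : ℂ) • y)) ∈
        {c | ∃ x : H, sNorm A x = 1 ∧ c = sNorm A (X x)} := ⟨_, hxnorm, rfl⟩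
    have hle := le_csSup (opSNorm_bddAbove ⟨c, hc0, hc⟩) hmem
    rw [map_smul, sNorm_smul hA (inv_nonneg.mpr htpos.le)] at hle
    have := mul_le_mul_of_nonneg_left hle htpos.le
    rw [← mul_assoc, mul_inv_cancel₀ h0, one_mul] at this
    calc sNorm A (X y)
        ≤ t * sSup {c | ∃ x : H, sNorm A x = 1 ∧ c = sNorm A (X x)} := this
      _ = opSNorm A X * sNorm A y := by unfold opSNorm; rw [mul_comm]

lemma twoA_fst (A : H →L[ℂ] H) (z : WithLp 2 (H × H)) : (twoA A z).fst = A z.fst := by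
  show A z.fst + (0 : H →L[ℂ] H) z.snd = A z.fst
  simp

lemma twoA_snd (A : H →L[ℂ] H) (z : WithLp 2 (H × H)) : (twoA A z).snd = A z.snd := by
  show (0 : H →L[ℂ] H) z.fst + A z.snd = A z.snd
  simp

lemma twoA_inner (A : H →L[ℂ] H) (z w : WithLp 2 (H × H)) :
    sInner (twoA A) z w = sInner A z.fst w.fst + sInner A z.snd w.snd := by
  show (inner ℂ (twoA A z) w : ℂ) = _
  rw [WithLp.prod_inner_apply]
  show inner ℂ (twoA A z).fst w.fst + inner ℂ (twoA A z).snd w.snd = _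
  rw [twoA_fst, twoA_snd]
  rfl

lemma twoA_sNorm {A : H →L[ℂ] H} (hA : A.IsPositive) (z : WithLp 2 (H × H)) :
    sNorm (twoA A) z = Real.sqrt (sNorm A z.fst ^ 2 + sNorm A z.snd ^ 2) := by
  rw [sNorm, twoA_inner, Complex.add_re, ← sNorm_sq hA, ← sNorm_sq hA]

lemma twoA_sNorm_one {A : H →L[ℂ] H} (hA : A.IsPositive) {z : WithLp 2 (H × H)}
    (hz : sNorm (twoA A) z = 1) : sNorm A z.fst ^ 2 + sNorm A z.snd ^ 2 = 1 := by
  rw [twoA_sNorm hA] at hz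
  exact Real.sqrt_eq_one.mp hz

lemma sInner_self_ofReal {A : H →L[ℂ] H} (hA : A.IsPositive) (u : H) :
    sInner A u u = ((sNorm A u ^ 2 : ℝ) : ℂ) := by
  have hre := sNorm_sq hA u
  rw [hre]
  exact (Complex.conj_eq_iff_re.mp (sInner_conj_symm hA u u)).symm

/-- The common set describing the numerical radius of the off-diagonal blocks. -/
noncomputable def offSet (A X : H →L[ℂ] H) : Set ℝ :=
  {c | ∃ z : WithLp 2 (H × H), sNorm (twoA A) z = 1 ∧ c = ‖sInner A (X z.snd) z.fst‖}

lemma offSet_ub {A X : H →L[ℂ] H} (hA : A.IsPositive) (hX : ABounded A X) :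
    ∀ c ∈ offSet A X, c ≤ (1 / 2) * opSNorm A X := by
  rintro c ⟨z, hz, rfl⟩
  have hz2 := twoA_sNorm_one hA hz
  have h1 := sInner_CS hA (X z.snd) z.fst
  have h2 := opSNorm_bound hA hX z.snd
  have h3 := myopSNorm_nonneg A X
  have hn1 := mysNorm_nonneg A z.fst
  have hn2 := mysNorm_nonneg A z.snd
  have e1 : sNorm A (X z.snd) * sNorm A z.fst ≤ opSNorm A X * sNorm A z.snd * sNorm A z.fst :=
    mul_le_mul_of_nonneg_right h2 hn1
  have e2 : sNorm A z.snd * sNorm A z.fst ≤ 1 / 2 := by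
    nlinarith [sq_nonneg (sNorm A z.fst - sNorm A z.snd)]
  nlinarith [mul_le_mul_of_nonneg_left e2 h3]

lemma offSet_sSup {A X : H →L[ℂ] H} (hA : A.IsPositive) (hX : ABounded A X) :
    sSup (offSet A X) = (1 / 2) * opSNorm A X := by
  have h3 := myopSNorm_nonneg A X
  have hhalf : (0 : ℝ) ≤ (1 / 2) * opSNorm A X := by linarith
  have hub := offSet_ub hA hX
  have hbdd : BddAbove (offSet A X) := ⟨(1 / 2) * opSNorm A X, hub⟩
  have hSnn : 0 ≤ sSup (offSet A X) :=
    Real.sSup_nonneg (fun c hc => by obtain ⟨z, -, rfl⟩ := hc; exact norm_nonneg _)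
  refine le_antisymm (Real.sSup_le hub hhalf) ?_
  have hkey : opSNorm A X ≤ 2 * sSup (offSet A X) := by
    apply Real.sSup_le _ (by linarith)
    rintro d ⟨y, hy, rfl⟩
    by_cases ht : sNorm A (X y) = 0
    · rw [ht]; linarith
    · set t := sNorm A (X y) with htdef
      have htpos : 0 < t := lt_of_le_of_ne (mysNorm_nonneg A (X y)) (Ne.symm ht)
      set a : ℝ := (Real.sqrt 2)⁻¹ with hadef
      have ha0 : 0 < a := by
        rw [hadef]
        positivity
      have ha2 : a ^ 2 = 1 / 2 := by
        rw [hadef, inv_pow, Real.sq_sqrt (by norm_num : (0:ℝ) ≤ 2)]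
        norm_num
      set u := X y with hudef
      set z : WithLp 2 (H × H) :=
        (WithLp.equiv 2 (H × H)).symm ((((a * t⁻¹ : ℝ)) : ℂ) • u, ((a : ℝ) : ℂ) • y) with hzdef
      have hzfst : z.fst = (((a * t⁻¹ : ℝ)) : ℂ) • u := rfl
      have hzsnd : z.snd = ((a : ℝ) : ℂ) • y := rfl
      have hut : sNorm A u = t := rfl
      have hn1 : sNorm A z.fst = a := by
        rw [hzfst, sNorm_smul hA (by positivity), hut, mul_assoc, inv_mul_cancel₀ ht, mul_one]
      have hn2 : sNorm A z.snd = a := by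
        rw [hzsnd, sNorm_smul hA ha0.le, hy, mul_one]
      have hznorm : sNorm (twoA A) z = 1 := by
        rw [twoA_sNorm hA, hn1, hn2, ha2]
        norm_num
      have hval : ‖sInner A (X z.snd) z.fst‖ = t / 2 := by
        have hXz : X z.snd = ((a : ℝ) : ℂ) • u := by rw [hzsnd, map_smul, hudef]
        rw [hXz, hzfst, sInner_smul_smul, Complex.conj_ofReal, sInner_self_ofReal hA, hut]
        have : ((a : ℝ) : ℂ) * (((a * t⁻¹ : ℝ)) : ℂ) * ((t ^ 2 : ℝ) : ℂ)
            = (((a * (a * t⁻¹) * t ^ 2 : ℝ)) : ℂ) := by push_cast; ring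
        rw [this, Complex.norm_real, Real.norm_eq_abs, abs_of_nonneg (by positivity)]
        have hane : a * (a * t⁻¹) * t ^ 2 = a ^ 2 * t := by
          field_simp
        rw [hane, ha2]
        ring
      have hmem : t / 2 ∈ offSet A X := ⟨z, hznorm, hval.symm⟩
      have := le_csSup hbdd hmem
      linarith
  linarith

lemma offSet_eq_1 (A X : H →L[ℂ] H) :
    {c | ∃ z : WithLp 2 (H × H), sNorm (twoA A) z = 1 ∧
      c = ‖sInner (twoA A) ((blk 0 X 0 0) z) z‖} = offSet A X := by
  have hinner : ∀ z : WithLp 2 (H × H),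
      sInner (twoA A) ((blk 0 X 0 0) z) z = sInner A (X z.snd) z.fst := by
    intro z
    rw [twoA_inner]
    have h1 : ((blk 0 X 0 0 : WithLp 2 (H × H) →L[ℂ] WithLp 2 (H × H)) z).fst = X z.snd := by
      show (0 : H →L[ℂ] H) z.fst + X z.snd = X z.snd
      simp
    have h2 : ((blk 0 X 0 0 : WithLp 2 (H × H) →L[ℂ] WithLp 2 (H × H)) z).snd = 0 := by
      show (0 : H →L[ℂ] H) z.fst + (0 : H →L[ℂ] H) z.snd = 0
      simp
    rw [h1, h2]
    have : sInner A 0 z.snd = 0 := by unfold sInner; simp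
    rw [this, add_zero]
  ext c
  simp only [Set.mem_setOf_eq, offSet, hinner]

lemma offSet_eq_2 {A : H →L[ℂ] H} (hA : A.IsPositive) (X : H →L[ℂ] H) :
    {c | ∃ z : WithLp 2 (H × H), sNorm (twoA A) z = 1 ∧
      c = ‖sInner (twoA A) ((blk 0 0 X 0) z) z‖} = offSet A X := by
  have hinner : ∀ z : WithLp 2 (H × H),
      sInner (twoA A) ((blk 0 0 X 0) z) z = sInner A (X z.fst) z.snd := by
    intro z
    rw [twoA_inner]
    have h1 : ((blk 0 0 X 0 : WithLp 2 (H × H) →L[ℂ] WithLp 2 (H × H)) z).fst = 0 := by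
      show (0 : H →L[ℂ] H) z.fst + (0 : H →L[ℂ] H) z.snd = 0
      simp
    have h2 : ((blk 0 0 X 0 : WithLp 2 (H × H) →L[ℂ] WithLp 2 (H × H)) z).snd = X z.fst := by
      show X z.fst + (0 : H →L[ℂ] H) z.snd = X z.fst
      simp
    rw [h1, h2]
    have : sInner A 0 z.fst = 0 := by unfold sInner; simp
    rw [this, zero_add]
  ext c
  simp only [Set.mem_setOf_eq, offSet, hinner]
  constructor
  · rintro ⟨z, hz, rfl⟩
    refine ⟨(WithLp.equiv 2 (H × H)).symm (z.snd, z.fst), ?_, rfl⟩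
    rw [twoA_sNorm hA] at hz ⊢
    rw [show (((WithLp.equiv 2 (H × H)).symm (z.snd, z.fst)) : WithLp 2 (H × H)).fst = z.snd
        from rfl,
      show (((WithLp.equiv 2 (H × H)).symm (z.snd, z.fst)) : WithLp 2 (H × H)).snd = z.fst
        from rfl, add_comm]
    exact hz
  · rintro ⟨z, hz, rfl⟩
    refine ⟨(WithLp.equiv 2 (H × H)).symm (z.snd, z.fst), ?_, rfl⟩
    rw [twoA_sNorm hA] at hz ⊢
    rw [show (((WithLp.equiv 2 (H × H)).symm (z.snd, z.fst)) : WithLp 2 (H × H)).fst = z.snd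
        from rfl,
      show (((WithLp.equiv 2 (H × H)).symm (z.snd, z.fst)) : WithLp 2 (H × H)).snd = z.fst
        from rfl, add_comm]
    exact hz

end Aux

theorem stmt5 {H : Type*} [NormedAddCommGroup H] [InnerProductSpace ℂ H] [CompleteSpace H]
    (A : H →L[ℂ] H) (hA : A.IsPositive)
    (X : H →L[ℂ] H) (hX : ABounded A X)
    (hXadm : ∃ Xs : H →L[ℂ] H, A.comp Xs = (ContinuousLinearMap.adjoint X).comp A) :
    numRad (twoA A) (blk 0 X 0 0) = (1 / 2) * opSNorm A X ∧
      numRad (twoA A) (blk 0 0 X 0) = (1 / 2) * opSNorm A X := by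
  constructor
  · show sSup _ = _
    rw [offSet_eq_1 A X]
    exact offSet_sSup hA hX
  · show sSup _ = _
    rw [offSet_eq_2 hA X]
    exact offSet_sSup hA hX
end

section
/- Let X be an A-bounded operator on H admitting an A-adjoint Xs (i.e. A∘Xs = X*∘A). Then w_𝔸([[0,X],[Xs,0]]) = ‖X‖_A. -/
set_option maxHeartbeats 1000000
set_option synthInstance.maxHeartbeats 1000000

section helper

variable {H : Type*} [NormedAddCommGroup H] [InnerProductSpace ℂ H]

lemma blk_fst (T X Y S : H →L[ℂ] H) (z : WithLp 2 (H × H)) :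
    (blk T X Y S z).fst = T z.fst + X z.snd := rfl

lemma blk_snd (T X Y S : H →L[ℂ] H) (z : WithLp 2 (H × H)) :
    (blk T X Y S z).snd = Y z.fst + S z.snd := rfl

end helper

theorem stmt10 {H : Type*} [NormedAddCommGroup H] [InnerProductSpace ℂ H] [CompleteSpace H]
    (A : H →L[ℂ] H) (hA : A.IsPositive)
    (X Xs : H →L[ℂ] H) (hX : ABounded A X)
    (hXs : A.comp Xs = (ContinuousLinearMap.adjoint X).comp A) :
    numRad (twoA A) (blk 0 X Xs 0) = opSNorm A X := by
  -- the square root of A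
  set B : H →L[ℂ] H := CFC.sqrt A with hBdef
  have hAnn : (0 : H →L[ℂ] H) ≤ A := (ContinuousLinearMap.nonneg_iff_isPositive A).mpr hA
  have hBsq : B * B = A := CFC.sqrt_mul_sqrt_self A hAnn
  have hBsa : IsSelfAdjoint B :=
    ((ContinuousLinearMap.nonneg_iff_isPositive _).mp (CFC.sqrt_nonneg _)).isSelfAdjoint
  have hBadj : ContinuousLinearMap.adjoint B = B := hBsa.adjoint_eq
  have hre_self : ∀ u : H, (inner ℂ u u : ℂ).re = ‖u‖ ^ 2 := by
    intro u
    have := inner_self_eq_norm_sq (𝕜 := ℂ) u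
    simpa using this
  -- sInner in terms of B
  have hin : ∀ x y : H, sInner A x y = inner ℂ (B x) (B y) := by
    intro x y
    have h1 : A x = B (B x) := by rw [← hBsq]; rfl
    rw [sInner, h1]
    calc (inner ℂ (B (B x)) y : ℂ) = inner ℂ (ContinuousLinearMap.adjoint B (B x)) y := by
          rw [hBadj]
      _ = inner ℂ (B x) (B y) := ContinuousLinearMap.adjoint_inner_left _ _ _
  have hnorm : ∀ x : H, sNorm A x = ‖B x‖ := by
    intro x
    rw [sNorm, hin, hre_self]
    exact Real.sqrt_sq (norm_nonneg _)
  -- sNorm of twoA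
  have h2in : ∀ z w : WithLp 2 (H × H), sInner (twoA A) z w
      = inner ℂ (B z.fst) (B w.fst) + inner ℂ (B z.snd) (B w.snd) := by
    intro z w
    have : sInner (twoA A) z w
        = (inner ℂ ((twoA A z).fst) w.fst + inner ℂ ((twoA A z).snd) w.snd : ℂ) := rfl
    rw [this, twoA, blk_fst, blk_snd]
    simp only [ContinuousLinearMap.zero_apply, add_zero, zero_add]
    rw [← hin, ← hin]; rfl
  have h2norm : ∀ z : WithLp 2 (H × H),
      sNorm (twoA A) z = Real.sqrt (‖B z.fst‖ ^ 2 + ‖B z.snd‖ ^ 2) := by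
    intro z
    rw [sNorm, h2in]
    congr 1
    rw [Complex.add_re, hre_self, hre_self]
  -- the A-bound
  obtain ⟨c, hc0, hc⟩ := hX
  have hcB : ∀ x : H, ‖B (X x)‖ ≤ c * ‖B x‖ := by
    intro x; have := hc x; rwa [hnorm, hnorm] at this
  -- the value of the numerical-radius functional
  have hsecond : ∀ a b : H, (inner ℂ (A (Xs a)) b : ℂ) = inner ℂ (A a) (X b) := by
    intro a b
    have h1 : A (Xs a) = (ContinuousLinearMap.adjoint X) (A a) :=
      ContinuousLinearMap.ext_iff.mp hXs a
    rw [h1, ContinuousLinearMap.adjoint_inner_left]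
  have hval : ∀ z : WithLp 2 (H × H),
      sInner (twoA A) (blk 0 X Xs 0 z) z
        = 2 * (Complex.re (inner ℂ (B (X z.snd)) (B z.fst) : ℂ) : ℂ) := by
    intro z
    rw [h2in, blk_fst, blk_snd]
    simp only [ContinuousLinearMap.zero_apply, add_zero, zero_add]
    have h2 : (inner ℂ (B (Xs z.fst)) (B z.snd) : ℂ)
        = (starRingEnd ℂ) (inner ℂ (B (X z.snd)) (B z.fst)) := by
      rw [← hin, sInner, hsecond, ← sInner, hin, ← inner_conj_symm]
    rw [h2, Complex.add_conj]
    push_cast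
    ring
  -- the two sets
  set S1 : Set ℝ := {c | ∃ x : H, sNorm A x = 1 ∧ c = sNorm A (X x)} with hS1
  set S2 : Set ℝ := {c | ∃ z : WithLp 2 (H × H), sNorm (twoA A) z = 1
      ∧ c = ‖sInner (twoA A) (blk 0 X Xs 0 z) z‖} with hS2
  have hS1sub : ∀ v ∈ S1, 0 ≤ v ∧ v ≤ c := by
    rintro v ⟨x, hx1, rfl⟩
    refine ⟨by rw [hnorm]; exact norm_nonneg _, ?_⟩
    rw [hnorm]
    calc ‖B (X x)‖ ≤ c * ‖B x‖ := hcB x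
      _ = c := by rw [← hnorm, hx1, mul_one]
  -- a membership criterion for S2 norms: for z with unit 2A-seminorm
  have hS2sub : ∀ v ∈ S2, 0 ≤ v ∧ v ≤ c := by
    rintro v ⟨z, hz1, rfl⟩
    refine ⟨norm_nonneg _, ?_⟩
    have hzsum : ‖B z.fst‖ ^ 2 + ‖B z.snd‖ ^ 2 = 1 := by
      have := hz1
      rw [h2norm] at this
      have h0 : (0:ℝ) ≤ ‖B z.fst‖ ^ 2 + ‖B z.snd‖ ^ 2 := by positivity
      nlinarith [Real.sq_sqrt h0]
    rw [hval]
    have hre : |Complex.re (inner ℂ (B (X z.snd)) (B z.fst) : ℂ)|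
        ≤ ‖B (X z.snd)‖ * ‖B z.fst‖ := by
      calc |Complex.re (inner ℂ (B (X z.snd)) (B z.fst) : ℂ)|
          ≤ ‖(inner ℂ (B (X z.snd)) (B z.fst) : ℂ)‖ := Complex.abs_re_le_norm _
        _ ≤ ‖B (X z.snd)‖ * ‖B z.fst‖ := norm_inner_le_norm _ _
    have : ‖(2 * (Complex.re (inner ℂ (B (X z.snd)) (B z.fst) : ℂ) : ℂ) : ℂ)‖
        = 2 * |Complex.re (inner ℂ (B (X z.snd)) (B z.fst) : ℂ)| := by
      rw [norm_mul]
      simp [Complex.norm_real]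
    rw [this]
    have h1 : ‖B (X z.snd)‖ ≤ c * ‖B z.snd‖ := hcB _
    nlinarith [norm_nonneg (B z.fst), norm_nonneg (B z.snd), norm_nonneg (B (X z.snd)),
      sq_nonneg (‖B z.fst‖ - ‖B z.snd‖), mul_nonneg (le_of_lt hc0)
        (mul_nonneg (norm_nonneg (B z.fst)) (norm_nonneg (B z.snd)))]
  have hS1bdd : BddAbove S1 := ⟨c, fun v hv => (hS1sub v hv).2⟩
  have hS2bdd : BddAbove S2 := ⟨c, fun v hv => (hS2sub v hv).2⟩
  have hS1nn : (0:ℝ) ≤ sSup S1 := Real.sSup_nonneg (fun v hv => (hS1sub v hv).1)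
  have hS2nn : (0:ℝ) ≤ sSup S2 := Real.sSup_nonneg (fun v hv => (hS2sub v hv).1)
  have key1 : numRad (twoA A) (blk 0 X Xs 0) ≤ opSNorm A X := by
    rw [numRad, opSNorm, ← hS1, ← hS2]
    refine Real.sSup_le ?_ hS1nn
    rintro v ⟨z, hz1, rfl⟩
    have hzsum : ‖B z.fst‖ ^ 2 + ‖B z.snd‖ ^ 2 = 1 := by
      have := hz1
      rw [h2norm] at this
      have h0 : (0:ℝ) ≤ ‖B z.fst‖ ^ 2 + ‖B z.snd‖ ^ 2 := by positivity
      nlinarith [Real.sq_sqrt h0]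
    rw [hval]
    have hnn : ‖(2 * (Complex.re (inner ℂ (B (X z.snd)) (B z.fst) : ℂ) : ℂ) : ℂ)‖
        = 2 * |Complex.re (inner ℂ (B (X z.snd)) (B z.fst) : ℂ)| := by
      rw [norm_mul]; simp [Complex.norm_real]
    rw [hnn]
    have hre : |Complex.re (inner ℂ (B (X z.snd)) (B z.fst) : ℂ)|
        ≤ ‖B (X z.snd)‖ * ‖B z.fst‖ := by
      calc |Complex.re (inner ℂ (B (X z.snd)) (B z.fst) : ℂ)|
          ≤ ‖(inner ℂ (B (X z.snd)) (B z.fst) : ℂ)‖ := Complex.abs_re_le_norm _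
        _ ≤ ‖B (X z.snd)‖ * ‖B z.fst‖ := norm_inner_le_norm _ _
    by_cases hy : ‖B z.snd‖ = 0
    · have : ‖B (X z.snd)‖ ≤ 0 := by
        calc ‖B (X z.snd)‖ ≤ c * ‖B z.snd‖ := hcB _
          _ = 0 := by rw [hy, mul_zero]
      have hXz : ‖B (X z.snd)‖ = 0 := le_antisymm this (norm_nonneg _)
      rw [hXz] at hre
      simp only [zero_mul] at hre
      have : |Complex.re (inner ℂ (B (X z.snd)) (B z.fst) : ℂ)| = 0 :=
        le_antisymm hre (abs_nonneg _)
      rw [this, mul_zero]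
      exact hS1nn
    · -- normalize z.snd
      set y : H := ((‖B z.snd‖ : ℂ))⁻¹ • z.snd with hy'
      have hyn : ‖B y‖ = 1 := by
        rw [hy', map_smul, norm_smul]
        simp only [norm_inv, Complex.norm_real, norm_norm, Real.norm_eq_abs]
        rw [abs_of_nonneg (norm_nonneg _)]
        field_simp
      have hXy : ‖B (X y)‖ = (‖B z.snd‖)⁻¹ * ‖B (X z.snd)‖ := by
        rw [hy', map_smul, map_smul, norm_smul]
        simp [abs_of_nonneg (norm_nonneg _)]
      have hmem : ‖B (X y)‖ ∈ S1 := ⟨y, by rw [hnorm]; exact hyn, by rw [hnorm]⟩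
      have hle : ‖B (X y)‖ ≤ sSup S1 := le_csSup hS1bdd hmem
      have hbnd : 2 * |Complex.re (inner ℂ (B (X z.snd)) (B z.fst) : ℂ)| ≤ ‖B (X y)‖ := by
        have hBz : ‖B (X z.snd)‖ = ‖B z.snd‖ * ‖B (X y)‖ := by
          rw [hXy]; field_simp
        have h2ab : 2 * (‖B z.fst‖ * ‖B z.snd‖) ≤ 1 := by
          nlinarith [sq_nonneg (‖B z.fst‖ - ‖B z.snd‖)]
        calc 2 * |Complex.re (inner ℂ (B (X z.snd)) (B z.fst) : ℂ)|
            ≤ 2 * (‖B (X z.snd)‖ * ‖B z.fst‖) := by linarith [hre]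
          _ = 2 * (‖B z.fst‖ * ‖B z.snd‖) * ‖B (X y)‖ := by rw [hBz]; ring
          _ ≤ 1 * ‖B (X y)‖ := by
              apply mul_le_mul_of_nonneg_right h2ab (norm_nonneg _)
          _ = ‖B (X y)‖ := one_mul _
      linarith
  have key2 : opSNorm A X ≤ numRad (twoA A) (blk 0 X Xs 0) := by
    rw [numRad, opSNorm, ← hS1, ← hS2]
    refine Real.sSup_le ?_ hS2nn
    rintro v ⟨x, hx1, rfl⟩
    rw [hnorm] at hx1 ⊢
    by_cases hv : ‖B (X x)‖ = 0
    · rw [hv]; exact hS2nn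
    · set v := ‖B (X x)‖ with hvdef
      have hvpos : 0 < v := lt_of_le_of_ne (norm_nonneg _) (Ne.symm hv)
      -- build the test vector
      set u : H := ((v : ℂ))⁻¹ • (X x) with hu
      set z : WithLp 2 (H × H) :=
        ((Real.sqrt 2 : ℂ))⁻¹ • ((WithLp.equiv 2 (H × H)).symm (u, x)) with hz
      have hzf : z.fst = ((Real.sqrt 2 : ℂ))⁻¹ • u := rfl
      have hzs : z.snd = ((Real.sqrt 2 : ℂ))⁻¹ • x := rfl
      have hsqrt2 : (0:ℝ) < Real.sqrt 2 := Real.sqrt_pos.mpr (by norm_num)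
      have hBu : ‖B u‖ = 1 := by
        rw [hu, map_smul, norm_smul, norm_inv, Complex.norm_real, Real.norm_eq_abs,
          ← hvdef, abs_of_nonneg (le_of_lt hvpos)]
        field_simp
      have hn2 : ‖((Real.sqrt 2 : ℂ))⁻¹‖ = (Real.sqrt 2)⁻¹ := by
        rw [norm_inv, Complex.norm_real, Real.norm_eq_abs, abs_of_nonneg (le_of_lt hsqrt2)]
      have hBzf : ‖B z.fst‖ = (Real.sqrt 2)⁻¹ := by
        rw [hzf, map_smul, norm_smul, hn2, hBu, mul_one]
      have hBzs : ‖B z.snd‖ = (Real.sqrt 2)⁻¹ := by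
        rw [hzs, map_smul, norm_smul, hn2, hx1, mul_one]
      have hzn : sNorm (twoA A) z = 1 := by
        rw [h2norm, hBzf, hBzs]
        have h2 : Real.sqrt 2 ^ 2 = 2 := Real.sq_sqrt (by norm_num)
        have hsum : (Real.sqrt 2)⁻¹ ^ 2 + (Real.sqrt 2)⁻¹ ^ 2 = 1 := by
          field_simp
          linarith [h2]
        rw [hsum, Real.sqrt_one]
      -- the value at z
      have hinner : (inner ℂ (B (X z.snd)) (B z.fst) : ℂ) = (v / 2 : ℝ) := by
        rw [hzf, hzs, hu, map_smul, map_smul, map_smul, map_smul]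
        rw [inner_smul_left, inner_smul_right, inner_smul_right]
        rw [inner_self_eq_norm_sq_to_K (𝕜 := ℂ)]
        rw [← hvdef]
        have hconj : (starRingEnd ℂ) (((Real.sqrt 2 : ℂ))⁻¹) = ((Real.sqrt 2 : ℂ))⁻¹ := by
          rw [map_inv₀, Complex.conj_ofReal]
        rw [hconj]
        have hs2 : ((Real.sqrt 2 : ℂ)) * ((Real.sqrt 2 : ℂ)) = 2 := by
          rw [← Complex.ofReal_mul, Real.mul_self_sqrt (by norm_num)]
          norm_num
        have hvne : (v : ℂ) ≠ 0 := Complex.ofReal_ne_zero.mpr (ne_of_gt hvpos)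
        have hs2ne : ((Real.sqrt 2 : ℂ)) ≠ 0 := by
          intro h
          rw [h, mul_zero] at hs2
          norm_num at hs2
        field_simp
        push_cast
        linear_combination (-((v:ℂ)^2 / 2)) * hs2
      have hvmem : v ∈ S2 := by
        refine ⟨z, hzn, ?_⟩
        rw [hval, hinner]
        have : (2 : ℂ) * ((Complex.re ((v / 2 : ℝ) : ℂ) : ℝ) : ℂ) = (v : ℂ) := by
          simp only [Complex.ofReal_re]
          push_cast
          ring
        rw [this, Complex.norm_real, Real.norm_eq_abs, abs_of_nonneg (le_of_lt hvpos)]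
      exact le_csSup hS2bdd hvmem
  exact le_antisymm key1 key2
end
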